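/- The total number of row additions in the stack-based algorithm equals C(k,g) + C(k-1,g-1) + ... + C(k-g+2, 2), i.e., the sum over strictly increasing g-tuples in {0,...,k-1} of the number r(c) of maximal consecutive entries at the end of c equals ∑_{i=0}^{g-2} C(k-i, g-i). -/

import Mathlib

set_option maxHeartbeats 1000000

lemma cardStrictMonoFin (m n : ℕ) :
    (Finset.univ.filter (fun c : Fin m → Fin n => StrictMono c)).card = n.choose m := by
  have key : (Finset.univ.filter (fun c : Fin m → Fin n => StrictMono c)).card
      = (Finset.powersetCard m (Finset.univ : Finset (Fin n))).card := by
    refine Finset.card_bij (fun (c : Fin m → Fin n) _ => Finset.image c Finset.univ) ?_ ?_ ?_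
    · intro c hc
      simp only [Finset.mem_filter] at hc
      simp only [Finset.mem_powersetCard]
      exact ⟨Finset.subset_univ _,
        by rw [Finset.card_image_of_injective _ hc.2.injective, Finset.card_univ,
          Fintype.card_fin]⟩
    · intro a ha b hb hab
      simp only [Finset.mem_filter] at ha hb
      have hcb : (Finset.image b Finset.univ).card = m := by
        rw [Finset.card_image_of_injective _ hb.2.injective, Finset.card_univ, Fintype.card_fin]
      have h1 := Finset.orderEmbOfFin_unique hcb
        (fun x => hab ▸ Finset.mem_image_of_mem a (Finset.mem_univ x)) ha.2
      have h2 := Finset.orderEmbOfFin_unique hcb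
        (fun x => Finset.mem_image_of_mem b (Finset.mem_univ x)) hb.2
      exact h1.trans h2.symm
    · intro S hS
      simp only [Finset.mem_powersetCard] at hS
      refine ⟨S.orderEmbOfFin hS.2, Finset.mem_filter.2 ⟨Finset.mem_univ _,
        (S.orderEmbOfFin hS.2).strictMono⟩, ?_⟩
      ext x
      simp only [Finset.mem_image]
      constructor
      · rintro ⟨i, _, rfl⟩; exact Finset.orderEmbOfFin_mem _ _ _
      · intro hx
        have : x ∈ Set.range (S.orderEmbOfFin hS.2) := by
          rw [Finset.range_orderEmbOfFin]; exact hx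
        rcases this with ⟨i, rfl⟩
        exact ⟨i, Finset.mem_univ _, rfl⟩
  rw [key, Finset.card_powersetCard, Finset.card_univ, Fintype.card_fin]

lemma count_trailing (k g i : ℕ) (hg : 2 ≤ g) (hk : g ≤ k) (hi1 : 1 ≤ i) (hi2 : i ≤ g - 1) :
    (Finset.univ.filter (fun c : Fin g → Fin k =>
        (∀ a b : Fin g, a < b → c a < c b) ∧
        ∀ j < i, (c ⟨g - 1 - j, by omega⟩ : ℕ) + j = (c ⟨g - 1, by omega⟩ : ℕ))).card
      = (k - i + 1).choose (g - i + 1) := by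
  rw [← cardStrictMonoFin (g - i + 1) (k - i + 1)]
  have hkey : ∀ c : Fin g → Fin k, ((∀ a b : Fin g, a < b → c a < c b) ∧
      ∀ j < i, (c ⟨g - 1 - j, by omega⟩ : ℕ) + j = (c ⟨g - 1, by omega⟩ : ℕ)) →
      ∀ t : ℕ, t ≤ g - i → ∀ ht : t < g, (c ⟨t, ht⟩ : ℕ) < k - i + 1 := by
    intro c hcc t htgi ht
    obtain ⟨hmono, hcond⟩ := hcc
    have hKlt : g - i < g := by omega
    have h1 := hcond (i - 1) (by omega)
    have e1 : (⟨g - 1 - (i - 1), by omega⟩ : Fin g) = ⟨g - i, hKlt⟩ := by simp only [Fin.mk.injEq]; omega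
    rw [e1] at h1
    have h2 : (c ⟨t, ht⟩ : ℕ) ≤ (c ⟨g - i, hKlt⟩ : ℕ) := by
      rcases Nat.lt_or_ge t (g - i) with h | h
      · exact le_of_lt (hmono _ _ (Fin.mk_lt_mk.2 h))
      · have heq : (⟨t, ht⟩ : Fin g) = ⟨g - i, hKlt⟩ := by simp only [Fin.mk.injEq]; omega
        rw [heq]
    have h3 : (c ⟨g - 1, Nat.sub_lt (by omega) one_pos⟩ : ℕ) < k := (c _).isLt
    have h4 : (c ⟨g - 1, by omega⟩ : ℕ) = (c ⟨g - 1, Nat.sub_lt (by omega) one_pos⟩ : ℕ) := rfl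
    omega
  refine Finset.card_bij'
    (fun c hc => fun t : Fin (g - i + 1) =>
      (⟨(c ⟨(t : ℕ), by have := t.2; omega⟩ : ℕ),
        hkey c (Finset.mem_filter.1 hc).2 (t : ℕ) (by have := t.2; omega) _⟩ : Fin (k - i + 1)))
    (fun d hd => fun t : Fin g =>
      (⟨(d ⟨min (t : ℕ) (g - i), by omega⟩ : ℕ) + ((t : ℕ) - (g - i)), by
        have hb := (d ⟨min (t : ℕ) (g - i), by omega⟩).2
        have ht := t.2
        omega⟩ : Fin k))
    ?_ ?_ ?_ ?_
  · -- forward maps into strict monos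
    intro c hc
    obtain ⟨-, hmono, -⟩ := Finset.mem_filter.1 hc
    refine Finset.mem_filter.2 ⟨Finset.mem_univ _, ?_⟩
    intro a b hab
    exact Fin.mk_lt_mk.2 (hmono _ _ (Fin.mk_lt_mk.2 hab))
  · -- backward maps into the condition set
    intro d hd
    obtain ⟨-, hmono⟩ := Finset.mem_filter.1 hd
    refine Finset.mem_filter.2 ⟨Finset.mem_univ _, ?_, ?_⟩
    · intro a b hab
      have hab' : (a : ℕ) < (b : ℕ) := hab
      rw [Fin.mk_lt_mk]
      have hle : (d ⟨min (a : ℕ) (g - i), by omega⟩ : ℕ) ≤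
          (d ⟨min (b : ℕ) (g - i), by omega⟩ : ℕ) := by
        apply Fin.le_def.1
        apply hmono.monotone
        exact Fin.mk_le_mk.2 (by omega)
      rcases Nat.lt_or_ge (a : ℕ) (g - i) with ha | ha
      · rcases le_or_gt (b : ℕ) (g - i) with hb | hb
        · have hlt : (d ⟨min (a : ℕ) (g - i), by omega⟩ : ℕ) <
              (d ⟨min (b : ℕ) (g - i), by omega⟩ : ℕ) := by
            apply Fin.lt_def.1
            apply hmono
            exact Fin.mk_lt_mk.2 (by omega)
          omega
        · rcases Nat.eq_or_lt_of_le hle with he | hlt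
          · -- min a = a < g-i = min b would force strict; but we can argue directly
            have hlt : (d ⟨min (a : ℕ) (g - i), by omega⟩ : ℕ) <
                (d ⟨min (b : ℕ) (g - i), by omega⟩ : ℕ) := by
              apply Fin.lt_def.1
              apply hmono
              exact Fin.mk_lt_mk.2 (by omega)
            omega
          · omega
      · omega
    · intro j hj
      have e1 : (⟨min (g - 1 - j : ℕ) (g - i), by omega⟩ : Fin (g - i + 1)) =
          ⟨g - i, by omega⟩ := by simp only [Fin.mk.injEq]; omega
      have e2 : (⟨min (g - 1 : ℕ) (g - i), by omega⟩ : Fin (g - i + 1)) =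
          ⟨g - i, by omega⟩ := by simp only [Fin.mk.injEq]; omega
      show (d ⟨min (g - 1 - j : ℕ) (g - i), by omega⟩ : ℕ) + ((g - 1 - j) - (g - i)) + j
          = (d ⟨min (g - 1 : ℕ) (g - i), by omega⟩ : ℕ) + ((g - 1) - (g - i))
      rw [e1, e2]
      omega
  · -- left inverse
    intro c hc
    obtain ⟨-, hmono, hcond⟩ := Finset.mem_filter.1 hc
    funext t
    apply Fin.ext
    show (c ⟨min (t : ℕ) (g - i), by omega⟩ : ℕ) + ((t : ℕ) - (g - i)) = (c t : ℕ)
    rcases le_or_gt (t : ℕ) (g - i) with h | h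
    · have e1 : (⟨min (t : ℕ) (g - i), by omega⟩ : Fin g) = t :=
        Fin.ext (by simp only [Fin.val_mk]; omega)
      rw [e1]
      omega
    · have e1 : (⟨min (t : ℕ) (g - i), by omega⟩ : Fin g) = ⟨g - i, by omega⟩ := by
        simp only [Fin.mk.injEq]; omega
      rw [e1]
      have ht := t.2
      have h1 := hcond (i - 1) (by omega)
      have e2 : (⟨g - 1 - (i - 1), by omega⟩ : Fin g) = ⟨g - i, by omega⟩ := by simp only [Fin.mk.injEq]; omega
      rw [e2] at h1
      have h2 := hcond (g - 1 - (t : ℕ)) (by omega)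
      have e3 : (⟨g - 1 - (g - 1 - (t : ℕ)), by omega⟩ : Fin g) = t :=
        Fin.ext (by simp only [Fin.val_mk]; omega)
      rw [e3] at h2
      omega
  · -- right inverse
    intro d hd
    funext t
    apply Fin.ext
    have ht := t.2
    show (d ⟨min (t : ℕ) (g - i), by omega⟩ : ℕ) + ((t : ℕ) - (g - i)) = (d t : ℕ)
    have e1 : (⟨min (t : ℕ) (g - i), by omega⟩ : Fin (g - i + 1)) = t :=
      Fin.ext (by simp only [Fin.val_mk]; omega)
    rw [e1]
    omega

theorem stmt_10 (k g : ℕ) (hg : 2 ≤ g) (hk : g ≤ k) :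
    ∑ c ∈ Finset.univ.filter (fun c : Fin g → Fin k => ∀ a b : Fin g, a < b → c a < c b),
        ((Finset.Icc 1 (g - 1)).filter (fun i =>
          ∀ j < i, (c ⟨g - 1 - j, by omega⟩ : ℕ) + j = (c ⟨g - 1, by omega⟩ : ℕ))).card =
      ∑ i ∈ Finset.range (g - 1), Nat.choose (k - i) (g - i) := by
  simp only [Finset.card_filter]
  rw [Finset.sum_comm]
  have e : Finset.Icc 1 (g - 1) = Finset.Ico 1 g := by
    ext x; rw [Finset.mem_Icc, Finset.mem_Ico]; omega
  rw [e, Finset.sum_Ico_eq_sum_range]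
  apply Finset.sum_congr rfl
  intro x hx
  rw [Finset.mem_range] at hx
  rw [← Finset.sum_filter, ← Finset.card_eq_sum_ones, Finset.filter_filter]
  rw [count_trailing k g (1 + x) hg hk (by omega) (by omega)]
  congr 1 <;> omega
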